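/- Let A be an n×n matrix over a commutative ring and D the diagonal matrix with diagonal entries d₁,…,dₙ. Then det(D + A) = Σ_{S ⊆ {1,…,n}} (det A_{S,S}) · ∏_{i ∉ S} d_i, where det A_{∅,∅} = 1. -/

import Mathlib

open Finset Matrix

lemma det_piecewise_single {R : Type*} [CommRing R] {n : ℕ}
    (A : Matrix (Fin n) (Fin n) R) (s : Finset (Fin n)) :
    (Matrix.of (s.piecewise (fun i => Pi.single i (1:R)) (fun i => A i))).det =
      (A.submatrix ((sᶜ).orderEmbOfFin rfl) ((sᶜ).orderEmbOfFin rfl)).det := by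
  set M := Matrix.of (s.piecewise (fun i => Pi.single i (1:R)) (fun i => A i)) with hM
  let e : {x : Fin n // x ∈ s} ⊕ {x : Fin n // x ∉ s} ≃ Fin n := Equiv.sumCompl (· ∈ s)
  have hMe : M.submatrix e e =
      Matrix.fromBlocks 1 0
        (Matrix.of fun (j : {x : Fin n // x ∉ s}) (i : {x : Fin n // x ∈ s}) => A j i)
        (A.submatrix (fun j : {x : Fin n // x ∉ s} => (j : Fin n))
          (fun j : {x : Fin n // x ∉ s} => (j : Fin n))) := by
    ext i j
    cases i with
    | inl i =>
      cases j with
      | inl j =>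
        simp only [Matrix.submatrix_apply, Matrix.fromBlocks_apply₁₁, hM, Matrix.of_apply]
        rw [show e (Sum.inl i) = (i : Fin n) from rfl, show e (Sum.inl j) = (j : Fin n) from rfl,
          Finset.piecewise_eq_of_mem _ _ _ i.2, Pi.single_apply, Matrix.one_apply]
        exact if_congr (Subtype.ext_iff.symm.trans eq_comm) rfl rfl
      | inr j =>
        simp only [Matrix.submatrix_apply, Matrix.fromBlocks_apply₁₂, hM, Matrix.of_apply]
        rw [show e (Sum.inl i) = (i : Fin n) from rfl, show e (Sum.inr j) = (j : Fin n) from rfl,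
          Finset.piecewise_eq_of_mem _ _ _ i.2, Pi.single_apply]
        have : (j : Fin n) ≠ (i : Fin n) := fun h => j.2 (h ▸ i.2)
        simp [this]
    | inr i =>
      cases j with
      | inl j =>
        simp only [Matrix.submatrix_apply, Matrix.fromBlocks_apply₂₁, hM, Matrix.of_apply]
        rw [show e (Sum.inr i) = (i : Fin n) from rfl, show e (Sum.inl j) = (j : Fin n) from rfl,
          Finset.piecewise_eq_of_notMem _ _ _ i.2]
      | inr j =>
        simp only [Matrix.submatrix_apply, Matrix.fromBlocks_apply₂₂, hM, Matrix.of_apply]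
        rw [show e (Sum.inr i) = (i : Fin n) from rfl, show e (Sum.inr j) = (j : Fin n) from rfl,
          Finset.piecewise_eq_of_notMem _ _ _ i.2]
  have h1 : M.det = (A.submatrix (fun j : {x : Fin n // x ∉ s} => (j : Fin n))
      (fun j : {x : Fin n // x ∉ s} => (j : Fin n))).det := by
    rw [← Matrix.det_submatrix_equiv_self e M, hMe, Matrix.det_fromBlocks_zero₁₂,
      Matrix.det_one, one_mul]
  rw [h1]
  let g : Fin (sᶜ.card) ≃ {x : Fin n // x ∉ s} :=
    ((sᶜ).orderIsoOfFin rfl).toEquiv.trans (Equiv.subtypeEquivRight (by simp))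
  rw [← Matrix.det_submatrix_equiv_self g]
  congr 1

/-- Let `A` be an `n×n` matrix over a commutative ring and `D` the
diagonal matrix with diagonal entries `d₁,…,dₙ`.  Then
`det(D + A) = Σ_{S ⊆ {1,…,n}} (det A_{S,S}) · ∏_{i ∉ S} d_i`,
where the principal minor on the empty set is `1`. -/
theorem det_diagonal_add {R : Type*} [CommRing R] {n : ℕ}
    (A : Matrix (Fin n) (Fin n) R) (d : Fin n → R) :
    (Matrix.diagonal d + A).det =
      ∑ S ∈ Finset.univ.powerset,
        (A.submatrix (S.orderEmbOfFin rfl) (S.orderEmbOfFin rfl)).det * ∏ i ∈ Sᶜ, d i := by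
  have h1 : (Matrix.diagonal d + A).det =
      ∑ s : Finset (Fin n),
        (Matrix.detRowAlternating (R := R) (n := Fin n))
          (s.piecewise (fun i => (Matrix.diagonal d) i) (fun i => A i)) := by
    have := (Matrix.detRowAlternating (R := R) (n := Fin n)).toMultilinearMap.map_add_univ
      (fun i => (Matrix.diagonal d) i) (fun i => A i)
    exact this
  have h2 : ∀ s : Finset (Fin n),
      (Matrix.detRowAlternating (R := R) (n := Fin n))
        (s.piecewise (fun i => (Matrix.diagonal d) i) (fun i => A i)) =
      (A.submatrix ((sᶜ).orderEmbOfFin rfl) ((sᶜ).orderEmbOfFin rfl)).det * ∏ i ∈ s, d i := by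
    intro s
    have key := det_piecewise_single A s
    set E : Fin n → Fin n → R := s.piecewise (fun i => Pi.single i (1:R)) (fun i => A i) with hE
    have hrow : s.piecewise (fun i => (Matrix.diagonal d) i) (fun i => A i)
        = s.piecewise (fun i => d i • E i) E := by
      funext i
      by_cases hi : i ∈ s
      · rw [Finset.piecewise_eq_of_mem _ _ _ hi, Finset.piecewise_eq_of_mem _ _ _ hi, hE,
          Finset.piecewise_eq_of_mem _ _ _ hi]
        funext j
        by_cases h : i = j <;> simp [Matrix.diagonal, Pi.single_apply, h, eq_comm]
      · rw [Finset.piecewise_eq_of_notMem _ _ _ hi, Finset.piecewise_eq_of_notMem _ _ _ hi, hE,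
          Finset.piecewise_eq_of_notMem _ _ _ hi]
    rw [hrow]
    erw [(Matrix.detRowAlternating (R := R) (n := Fin n)).toMultilinearMap.map_piecewise_smul]
    rw [smul_eq_mul, mul_comm]
    congr 1
  rw [h1]
  simp only [h2]
  rw [Finset.powerset_univ]
  refine Fintype.sum_bijective (Compl.compl : Finset (Fin n) → Finset (Fin n)) compl_involutive.bijective _ _ fun s => ?_
  simp [compl_compl]
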